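/- arXiv:2309.05183 — 4 statements merged into one kernel-verified Lean document; each statement's English description precedes it below -/
import Mathlib

section
/- Let f be a submodular set function on a finite ground set Ω with f defined on all subsets, and let A be a finite set output by the trim procedure applied to B (repeatedly removing elements with negative marginal contribution, each element checked once in some order, where an element once checked is never rechecked). Then every x ∈ A satisfies f(A) − f(A \ {x}) ≥ 0. -/
def Submodular {α : Type*} [DecidableEq α] (f : Finset α → ℝ) : Prop :=
  ∀ S T : Finset α, f (S ∪ T) + f (S ∩ T) ≤ f S + f T

/-- The trim procedure: scan the elements in the order given by the list `l`,
removing an element whenever its marginal contribution to the current set is negative.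
Each element is checked exactly once. -/
noncomputable def trimFold {α : Type*} [DecidableEq α] (f : Finset α → ℝ) : List α → Finset α → Finset α
  | [], A => A
  | x :: xs, A => if f A - f (A.erase x) < 0 then trimFold f xs (A.erase x) else trimFold f xs A

lemma trimFold_subset {α : Type*} [DecidableEq α] (f : Finset α → ℝ) :
    ∀ (l : List α) (B : Finset α), trimFold f l B ⊆ B
  | [], B => subset_rfl
  | x :: xs, B => by
    simp only [trimFold]
    split
    · exact (trimFold_subset f xs _).trans (Finset.erase_subset _ _)
    · exact trimFold_subset f xs B

lemma trim_key {α : Type*} [DecidableEq α] (f : Finset α → ℝ) (hf : Submodular f) :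
    ∀ (l : List α) (B : Finset α) (x : α), x ∈ l → x ∈ trimFold f l B →
      f (trimFold f l B) - f ((trimFold f l B).erase x) ≥ 0
  | [], B, x, hxl, _ => by simp at hxl
  | y :: ys, B, x, hxl, hmem => by
    by_cases hc : f B - f (B.erase y) < 0
    · simp only [trimFold, if_pos hc] at hmem ⊢
      rcases List.mem_cons.mp hxl with rfl | hxys
      · exact absurd (Finset.mem_erase.mp (trimFold_subset f ys _ hmem)).1 (by simp)
      · exact trim_key f hf ys (B.erase y) x hxys hmem
    · simp only [trimFold, if_neg hc] at hmem ⊢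
      rcases List.mem_cons.mp hxl with rfl | hxys
      · -- x = y was kept: f B - f (B.erase x) ≥ 0, and trimFold f ys B ⊆ B
        set A := trimFold f ys B with hAdef
        have hAB : A ⊆ B := trimFold_subset f ys B
        have hxB : x ∈ B := hAB hmem
        have hU : A ∪ B.erase x = B := by
          ext z
          simp only [Finset.mem_union, Finset.mem_erase]
          constructor
          · rintro (hz | ⟨_, hz⟩)
            · exact hAB hz
            · exact hz
          · intro hz
            by_cases hzx : z = x
            · exact Or.inl (hzx ▸ hmem)
            · exact Or.inr ⟨hzx, hz⟩
        have hI : A ∩ B.erase x = A.erase x := by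
          ext z
          simp only [Finset.mem_inter, Finset.mem_erase]
          constructor
          · rintro ⟨hz, hzx, _⟩; exact ⟨hzx, hz⟩
          · rintro ⟨hzx, hz⟩; exact ⟨hz, hzx, hAB hz⟩
        have := hf A (B.erase x)
        rw [hU, hI] at this
        push_neg at hc
        linarith
      · exact trim_key f hf ys B x hxys hmem

/-- after trimming (every element of `B` checked once in the order `l`),
every remaining element has nonnegative marginal contribution. -/
theorem stmt3 {α : Type*} [DecidableEq α] [Fintype α] (f : Finset α → ℝ)
    (hf : Submodular f) (B : Finset α) (l : List α) (hl : ∀ x ∈ B, x ∈ l)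
    (A : Finset α) (hA : A = trimFold f l B) :
    ∀ x ∈ A, f A - f (A.erase x) ≥ 0 := by
  subst hA
  intro x hx
  exact trim_key f hf l B x (hl x (trimFold_subset f l B hx)) hx
end

section
/- Let f be a nonnegative submodular function on a finite ground set Ω, let O and T be finite subsets of Ω with |O| ≥ |T|, and suppose f(T) − f(T \ {y}) ≥ 0 for all y ∈ T. Let π : O → T ∪ {∅} be an injective partial matching that fixes every element of O ∩ T and maps each element of O \ T either to no element or to a distinct element of T \ O. For x ∈ O define ∇(x,T) = 0 if x ∈ T, and otherwise ∇(x,T) = max{0, max_{y ∈ T}(f((T∪{x})\{y}) − f(T)), [f(T∪{x}) − f(T) if π(x) = ∅]}. Then ∑_{x∈O} ∇(x,T) ≥ f(O ∪ T) − 2 f(T). -/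
/-- The local-search gain `∇(x, T)` of an item `x` with respect to the current feasible set `T`:
`0` if `x ∈ T`; otherwise the maximum of `0`, all swap gains `f((T∪{x})\{y}) − f T` for `y ∈ T`,
and additionally the direct-add gain `f(T∪{x}) − f T` when `π x = none`. -/
noncomputable def nabla {α : Type*} [DecidableEq α] (f : Finset α → ℝ)
    (T : Finset α) (π : α → Option α) (x : α) : ℝ :=
  if x ∈ T then 0
  else (insert (0 : ℝ)
        ((T.image fun y => f ((insert x T).erase y) - f T) ∪
          (if π x = none then {f (insert x T) - f T} else ∅))).max' (by simp)

lemma marg {α : Type*} [DecidableEq α] {f : Finset α → ℝ} (hf : Submodular f)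
    {A B : Finset α} (hAB : A ⊆ B) {x : α} (hx : x ∉ B) :
    f (insert x B) - f B ≤ f (insert x A) - f A := by
  have h := hf (insert x A) B
  have h1 : insert x A ∪ B = insert x B := by
    rw [Finset.insert_union, Finset.union_eq_right.mpr hAB]
  have h2 : insert x A ∩ B = A := by
    rw [Finset.insert_inter_of_notMem hx, Finset.inter_eq_left.mpr hAB]
  rw [h1, h2] at h
  linarith

lemma sumii {α : Type*} [DecidableEq α] {f : Finset α → ℝ} (hf : Submodular f)
    (T : Finset α) (A : Finset α) :
    f (A ∪ T) - f T ≤ ∑ x ∈ A, (f (insert x T) - f T) := by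
  induction A using Finset.induction with
  | empty => simp
  | @insert a A ha ih =>
    rw [Finset.sum_insert ha, Finset.insert_union]
    by_cases haT : a ∈ A ∪ T
    · rw [Finset.insert_eq_self.mpr haT]
      have haT' : a ∈ T := by
        rcases Finset.mem_union.mp haT with h | h
        · exact absurd h ha
        · exact h
      rw [Finset.insert_eq_self.mpr haT']
      linarith
    · have h := marg hf (Finset.subset_union_right) haT
      linarith

lemma sumiii {α : Type*} [DecidableEq α] {f : Finset α → ℝ} (hf : Submodular f)
    (T : Finset α) : ∀ S ⊆ T, ∑ y ∈ S, (f T - f (T.erase y)) ≤ f T - f (T \ S) := by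
  intro S hS
  induction S using Finset.induction with
  | empty => simp
  | @insert a A ha ih =>
    have haT : a ∈ T := hS (Finset.mem_insert_self a A)
    have hA : A ⊆ T := fun x hx => hS (Finset.mem_insert_of_mem hx)
    rw [Finset.sum_insert ha]
    have hsub : T \ insert a A ⊆ T.erase a := by
      intro x hx
      simp only [Finset.mem_sdiff, Finset.mem_insert, not_or] at hx
      exact Finset.mem_erase.mpr ⟨hx.2.1, hx.1⟩
    have hane : a ∉ T.erase a := Finset.notMem_erase a T
    have h := marg hf hsub hane
    rw [Finset.insert_erase haT] at h
    have h2 : insert a (T \ insert a A) = T \ A := by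
      ext x
      simp only [Finset.mem_insert, Finset.mem_sdiff, Finset.mem_insert, not_or]
      constructor
      · rintro (rfl | ⟨hx, _, hx2⟩)
        · exact ⟨haT, fun hxA => ha hxA⟩
        · exact ⟨hx, hx2⟩
      · rintro ⟨hx, hxA⟩
        by_cases hxa : x = a
        · exact Or.inl hxa
        · exact Or.inr ⟨hx, hxa, hxA⟩
    rw [h2] at h
    have ihA := ih hA
    linarith

/-- the total local-search gain over `O` is at least `f(O ∪ T) − 2 f(T)`. -/
theorem stmt8 {α : Type*} [DecidableEq α] [Fintype α] (f : Finset α → ℝ)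
    (hf : Submodular f) (hf0 : ∀ S : Finset α, 0 ≤ f S)
    (O T : Finset α) (hcard : T.card ≤ O.card)
    (hT : ∀ y ∈ T, f T - f (T.erase y) ≥ 0)
    (π : α → Option α)
    (hfix : ∀ x ∈ O ∩ T, π x = some x)
    (hmap : ∀ x ∈ O, x ∉ T → π x = none ∨ ∃ y, π x = some y ∧ y ∈ T \ O)
    (hinj : ∀ x ∈ O, ∀ x' ∈ O, ∀ y : α, π x = some y → π x' = some y → x = x') :
    ∑ x ∈ O, nabla f T π x ≥ f (O ∪ T) - 2 * f T := by
  set g : α → ℝ := fun y => f T - f (T.erase y) with hg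
  set d : α → ℝ := fun x => ∑ y ∈ T, (if π x = some y then g y else 0) with hd
  -- per-element bound
  have key : ∀ x ∈ O, nabla f T π x ≥ (f (insert x T) - f T) - d x := by
    intro x hxO
    by_cases hxT : x ∈ T
    · have hπ : π x = some x := hfix x (Finset.mem_inter.mpr ⟨hxO, hxT⟩)
      have hd' : d x = g x := by
        simp only [hd, hπ, Option.some.injEq]
        rw [Finset.sum_ite_eq T x g]
        simp [hxT]
      rw [nabla, if_pos hxT, hd', Finset.insert_eq_self.mpr hxT]
      have := hT x hxT
      simp only [hg]
      linarith
    · rw [nabla, if_neg hxT]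
      rcases hmap x hxO hxT with hπ | ⟨y, hπ, hy⟩
      · have hd' : d x = 0 := by
          simp only [hd, hπ]
          simp
        rw [hd']
        have hmem : f (insert x T) - f T ∈ insert (0 : ℝ)
            ((T.image fun y => f ((insert x T).erase y) - f T) ∪
              (if π x = none then {f (insert x T) - f T} else ∅)) := by
          simp [hπ]
        have := Finset.le_max' _ _ hmem
        linarith
      · have hyT : y ∈ T := (Finset.mem_sdiff.mp hy).1
        have hd' : d x = g y := by
          simp only [hd, hπ, Option.some.injEq]
          rw [Finset.sum_ite_eq T y g]
          simp [hyT]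
        rw [hd']
        have hxy : x ≠ y := by
          rintro rfl
          exact (Finset.mem_sdiff.mp hy).2 hxO
        -- submodularity swap bound
        have hsub := hf ((insert x T).erase y) T
        have h1 : (insert x T).erase y ∪ T = insert x T := by
          ext a
          simp only [Finset.mem_union, Finset.mem_erase, Finset.mem_insert]
          constructor
          · rintro (⟨_, h | h⟩ | h)
            · exact Or.inl h
            · exact Or.inr h
            · exact Or.inr h
          · rintro (rfl | h)
            · exact Or.inl ⟨hxy, Or.inl rfl⟩
            · exact Or.inr h
        have h2 : (insert x T).erase y ∩ T = T.erase y := by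
          ext a
          simp only [Finset.mem_inter, Finset.mem_erase, Finset.mem_insert]
          constructor
          · rintro ⟨⟨hay, _⟩, haT⟩
            exact ⟨hay, haT⟩
          · rintro ⟨hay, haT⟩
            exact ⟨⟨hay, Or.inr haT⟩, haT⟩
        rw [h1, h2] at hsub
        have hmem : f ((insert x T).erase y) - f T ∈ insert (0 : ℝ)
            ((T.image fun y => f ((insert x T).erase y) - f T) ∪
              (if π x = none then {f (insert x T) - f T} else ∅)) := by
          apply Finset.mem_insert_of_mem
          apply Finset.mem_union_left
          exact Finset.mem_image_of_mem _ hyT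
        have := Finset.le_max' _ _ hmem
        simp only [hg]
        linarith
  have step1 : ∑ x ∈ O, nabla f T π x ≥
      ∑ x ∈ O, ((f (insert x T) - f T) - d x) := Finset.sum_le_sum key
  have step2 : f (O ∪ T) - f T ≤ ∑ x ∈ O, (f (insert x T) - f T) := sumii hf T O
  -- bound ∑ d
  have step3 : ∑ x ∈ O, d x ≤ ∑ y ∈ T, g y := by
    rw [hd]
    rw [Finset.sum_comm]
    apply Finset.sum_le_sum
    intro y hyT
    have hgy : 0 ≤ g y := hT y hyT
    have hcard1 : (O.filter fun x => π x = some y).card ≤ 1 := by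
      apply Finset.card_le_one.mpr
      intro a ha b hb
      simp only [Finset.mem_filter] at ha hb
      exact hinj a ha.1 b hb.1 y ha.2 hb.2
    calc ∑ x ∈ O, (if π x = some y then g y else 0)
        = (O.filter fun x => π x = some y).card • g y := by
          rw [← Finset.sum_filter, Finset.sum_const]
      _ ≤ 1 • g y := by
          apply nsmul_le_nsmul_left hgy hcard1
      _ = g y := one_smul _ _
  have step4 : ∑ y ∈ T, g y ≤ f T - f (T \ T) := sumiii hf T T (le_refl T)
  have step5 : f T - f (T \ T) ≤ f T := by
    have := hf0 (T \ T)
    linarith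
  have hsplit : ∑ x ∈ O, ((f (insert x T) - f T) - d x)
      = ∑ x ∈ O, (f (insert x T) - f T) - ∑ x ∈ O, d x := Finset.sum_sub_distrib _ _
  linarith [step1, step2, step3, step4, step5, hsplit ▸ step1]
end

section
/- Let f : 2^Ω → ℝ_{≥0} be a nonnegative submodular function on a finite ground set Ω, and let A ⊆ Ω be a fixed set. Let R be a random subset of Ω such that each element of Ω belongs to R with probability at most p (not necessarily independently). Then E[f(A ∪ R)] ≥ (1 − p) f(A). -/
/-- Abel summation lower bound: for antitone nonnegative `X` and nonnegative `V`,
`∑_{k<n} X k (V (k+1) - V k) ≥ X n V n - X 0 V 0`. -/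
lemma abel_aux (X V : ℕ → ℝ) (hXa : ∀ k, X (k + 1) ≤ X k)
    (hX0 : ∀ k, 0 ≤ X k) (hV : ∀ k, 0 ≤ V k) :
    ∀ n, X n * V n - X 0 * V 0 ≤ ∑ k ∈ Finset.range n, X k * (V (k + 1) - V k) := by
  intro n
  induction n with
  | zero => simp
  | succ n ih =>
    rw [Finset.sum_range_succ]
    have h1 : X (n + 1) * V (n + 1) ≤ X n * V (n + 1) :=
      mul_le_mul_of_nonneg_right (hXa n) (hV _)
    nlinarith [ih]

/-- Lemma 2.2 of Buchbinder–Feldman–Naor–Schwartz 2014: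
if each element lies in the random set `R` with probability at most `p`
(over a finite probability space `ι` with weights `w`), then
`E[f(A ∪ R)] ≥ (1 − p)·f(A)` for nonnegative submodular `f`. -/
theorem stmt10 {α : Type*} [DecidableEq α] [Fintype α]
    {ι : Type*} [Fintype ι] [DecidableEq ι]
    (f : Finset α → ℝ) (hf : Submodular f) (hf0 : ∀ S : Finset α, 0 ≤ f S)
    (A : Finset α) (p : ℝ) (hp0 : 0 ≤ p) (hp1 : p ≤ 1)
    (w : ι → ℝ) (hw0 : ∀ i, 0 ≤ w i) (hw1 : ∑ i, w i = 1)
    (R : ι → Finset α)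
    (hR : ∀ a : α, ∑ i ∈ Finset.univ.filter (fun i => a ∈ R i), w i ≤ p) :
    ∑ i, w i * f (A ∪ R i) ≥ (1 - p) * f A := by
  classical
  rcases isEmpty_or_nonempty α with hα | hα
  · -- trivial case: empty ground set
    have hA : A = ∅ := Finset.eq_empty_of_isEmpty A
    have hRi : ∀ i, R i = ∅ := fun i => Finset.eq_empty_of_isEmpty (R i)
    have : ∑ i, w i * f (A ∪ R i) = f A := by
      have : ∀ i, w i * f (A ∪ R i) = w i * f A := by
        intro i; rw [hRi i, Finset.union_empty]
      rw [Finset.sum_congr rfl fun i _ => this i, ← Finset.sum_mul, hw1, one_mul]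
    rw [this]
    nlinarith [hf0 A, hp0]
  · -- marginal probabilities
    set x : α → ℝ := fun a => ∑ i ∈ Finset.univ.filter (fun i => a ∈ R i), w i with hxdef
    have hx0 : ∀ a, 0 ≤ x a := fun a => Finset.sum_nonneg fun i _ => hw0 i
    have hxp : ∀ a, x a ≤ p := hR
    set n := Fintype.card α with hn
    set e0 : Fin n ≃ α := (Fintype.equivFin α).symm with he0
    set σ : Equiv.Perm (Fin n) := Tuple.sort (fun j => -(x (e0 j))) with hσ
    have hsort : Monotone ((fun j => -(x (e0 j))) ∘ σ) := Tuple.monotone_sort _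
    set e : Fin n ≃ α := σ.trans e0 with he
    have hanti : ∀ j k : Fin n, j ≤ k → x (e k) ≤ x (e j) := by
      intro j k hjk
      have h := hsort hjk
      simp only [Function.comp_apply] at h
      have : e j = e0 (σ j) := rfl
      have h2 : e k = e0 (σ k) := rfl
      rw [this, h2]
      linarith
    -- enumeration of α in order of decreasing marginals
    set aa : ℕ → α := fun k => if h : k < n then e ⟨k, h⟩ else Classical.arbitrary α with haa
    have haaval : ∀ k (h : k < n), aa k = e ⟨k, h⟩ := by
      intro k h; simp [haa, h]
    set B : ℕ → Finset α := fun k => (Finset.range k).image aa with hB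
    set V : ℕ → ℝ := fun k => f (A ∪ B k) with hV
    set X : ℕ → ℝ := fun k => if k < n then x (aa k) else 0 with hX
    have hB0 : B 0 = ∅ := by simp [hB]
    have hBn : B n = Finset.univ := by
      ext b
      simp only [hB, Finset.mem_image, Finset.mem_range, Finset.mem_univ, iff_true]
      refine ⟨(e.symm b).1, (e.symm b).2, ?_⟩
      rw [haaval _ (e.symm b).2]
      simp
    have hBsucc : ∀ k, B (k + 1) = insert (aa k) (B k) := by
      intro k
      simp [hB, Finset.range_add_one]
    have hnotmem : ∀ k, k < n → aa k ∉ B k := by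
      intro k hk hmem
      obtain ⟨j, hj, hje⟩ := Finset.mem_image.mp hmem
      rw [Finset.mem_range] at hj
      have hjn : j < n := hj.trans hk
      rw [haaval j hjn, haaval k hk] at hje
      have := e.injective hje
      have : j = k := by simpa using congrArg Fin.val this
      omega
    have hVpos : ∀ k, 0 ≤ V k := fun k => hf0 _
    -- chain lemma
    have hchain : ∀ S : Finset α, ∀ k, k ≤ n →
        f A + ∑ j ∈ Finset.range k, (if aa j ∈ S then V (j + 1) - V j else 0)
          ≤ f (A ∪ (S ∩ B k)) := by
      intro S k
      induction k with
      | zero => intro _; simp [hB0]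
      | succ k ih =>
        intro hk
        have hkn : k < n := Nat.lt_of_succ_le hk
        have ih' := ih (Nat.le_of_succ_le hk)
        rw [Finset.sum_range_succ]
        by_cases hs : aa k ∈ S
        · rw [if_pos hs]
          have hnm := hnotmem k hkn
          have hXY := hf (insert (aa k) (A ∪ (S ∩ B k))) (A ∪ B k)
          have h1 : insert (aa k) (A ∪ (S ∩ B k)) ∪ (A ∪ B k) = A ∪ B (k + 1) := by
            rw [hBsucc]; ext b
            simp only [Finset.mem_union, Finset.mem_insert, Finset.mem_inter]
            tauto
          have h2 : insert (aa k) (A ∪ (S ∩ B k)) ∩ (A ∪ B k) = A ∪ (S ∩ B k) := by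
            ext b
            simp only [Finset.mem_union, Finset.mem_insert, Finset.mem_inter]
            constructor
            · rintro ⟨h3 | h3, h4⟩
              · subst h3
                rcases h4 with h4 | h4
                · exact Or.inl h4
                · exact absurd h4 hnm
              · exact h3
            · intro h3
              refine ⟨Or.inr h3, ?_⟩
              tauto
          have h3 : A ∪ (S ∩ B (k + 1)) = insert (aa k) (A ∪ (S ∩ B k)) := by
            rw [hBsucc]; ext b
            simp only [Finset.mem_union, Finset.mem_insert, Finset.mem_inter]
            constructor
            · rintro (h4 | ⟨h4, h5 | h5⟩)
              · tauto
              · subst h5; tauto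
              · tauto
            · rintro (h4 | h4)
              · subst h4; exact Or.inr ⟨hs, Or.inl rfl⟩
              · tauto
          rw [h1, h2] at hXY
          rw [h3]
          have hv1 : V (k + 1) = f (A ∪ B (k + 1)) := rfl
          have hv2 : V k = f (A ∪ B k) := rfl
          rw [hv1, hv2]
          linarith
        · rw [if_neg hs]
          have heq : S ∩ B (k + 1) = S ∩ B k := by
            rw [hBsucc]; ext b
            simp only [Finset.mem_inter, Finset.mem_insert]
            constructor
            · rintro ⟨h3, h4 | h4⟩
              · subst h4; exact absurd h3 hs
              · exact ⟨h3, h4⟩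
            · tauto
          rw [heq]
          simpa using ih'
    -- per-realization bound
    have key : ∀ i, f A + ∑ j ∈ Finset.range n, (if aa j ∈ R i then V (j + 1) - V j else 0)
        ≤ f (A ∪ R i) := by
      intro i
      have h := hchain (R i) n le_rfl
      rwa [hBn, Finset.inter_univ] at h
    have hsum : ∑ i, w i * (f A + ∑ j ∈ Finset.range n,
          (if aa j ∈ R i then V (j + 1) - V j else 0))
        ≤ ∑ i, w i * f (A ∪ R i) :=
      Finset.sum_le_sum fun i _ => mul_le_mul_of_nonneg_left (key i) (hw0 i)
    -- rewrite the left-hand side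
    have hswap : ∑ i, w i * (∑ j ∈ Finset.range n,
          (if aa j ∈ R i then V (j + 1) - V j else 0))
        = ∑ j ∈ Finset.range n, x (aa j) * (V (j + 1) - V j) := by
      calc ∑ i, w i * (∑ j ∈ Finset.range n, (if aa j ∈ R i then V (j + 1) - V j else 0))
          = ∑ i, ∑ j ∈ Finset.range n,
              (if aa j ∈ R i then w i * (V (j + 1) - V j) else 0) := by
            refine Finset.sum_congr rfl fun i _ => ?_
            rw [Finset.mul_sum]
            refine Finset.sum_congr rfl fun j _ => ?_
            split <;> simp
        _ = ∑ j ∈ Finset.range n, ∑ i,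
              (if aa j ∈ R i then w i * (V (j + 1) - V j) else 0) := Finset.sum_comm
        _ = ∑ j ∈ Finset.range n, x (aa j) * (V (j + 1) - V j) := by
            refine Finset.sum_congr rfl fun j _ => ?_
            rw [← Finset.sum_filter, ← Finset.sum_mul]
    have hLHS : ∑ i, w i * (f A + ∑ j ∈ Finset.range n,
          (if aa j ∈ R i then V (j + 1) - V j else 0))
        = f A + ∑ j ∈ Finset.range n, x (aa j) * (V (j + 1) - V j) := by
      rw [← hswap]
      rw [show (∑ i, w i * (f A + ∑ j ∈ Finset.range n,
            (if aa j ∈ R i then V (j + 1) - V j else 0)))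
          = ∑ i, (w i * f A + w i * ∑ j ∈ Finset.range n,
            (if aa j ∈ R i then V (j + 1) - V j else 0)) from
        Finset.sum_congr rfl fun i _ => mul_add _ _ _]
      rw [Finset.sum_add_distrib, ← Finset.sum_mul, hw1, one_mul]
    -- properties of X
    have hXa : ∀ k, X (k + 1) ≤ X k := by
      intro k
      by_cases h1 : k + 1 < n
      · have h2 : k < n := Nat.lt_of_succ_lt h1
        simp only [hX, if_pos h1, if_pos h2, haaval _ h1, haaval _ h2]
        exact hanti ⟨k, h2⟩ ⟨k + 1, h1⟩ (by simp [Fin.le_def])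
      · simp only [hX, if_neg h1]
        split
        · exact hx0 _
        · exact le_refl 0
    have hX0 : ∀ k, 0 ≤ X k := by
      intro k
      simp only [hX]
      split
      · exact hx0 _
      · exact le_refl 0
    have habel := abel_aux X V hXa hX0 hVpos n
    have hXn : X n = 0 := by simp [hX]
    have hX0p : X 0 ≤ p := by
      simp only [hX]
      split
      · exact hxp _
      · exact hp0
    have hV0 : V 0 = f A := by simp [hV, hB0]
    have hmatch : ∑ j ∈ Finset.range n, x (aa j) * (V (j + 1) - V j)
        = ∑ j ∈ Finset.range n, X j * (V (j + 1) - V j) := by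
      refine Finset.sum_congr rfl fun j hj => ?_
      rw [Finset.mem_range] at hj
      simp [hX, hj]
    have hfinal : X 0 * V 0 ≤ p * f A := by
      rw [hV0]
      exact mul_le_mul_of_nonneg_right hX0p (hf0 A)
    rw [hLHS] at hsum
    rw [hmatch] at hsum
    rw [hXn] at habel
    simp only [zero_mul, zero_sub] at habel
    -- combine everything
    have : (1 - p) * f A ≤ ∑ i, w i * f (A ∪ R i) := by nlinarith
    exact this
end

section
/- Let l ≥ 1 and let (X_t)_{t=0}^{l} be nonnegative reals with X_0 = 0 satisfying X_{t+1} − X_t ≥ (1/l) V − (2/l) X_t for all 0 ≤ t < l, where V ≥ 0. Then X_l ≥ ((1 − (1 − 2/l)^l)/2) V, and in particular X_l ≥ ((1 − e^{−2})/2) V. -/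
/-- the recurrence from the monotone analysis of Sampling-Greedy. -/
theorem stmt14 (l : ℕ) (hl : 1 ≤ l) (V : ℝ) (hV : 0 ≤ V)
    (X : ℕ → ℝ) (hX0 : X 0 = 0) (hXnonneg : ∀ t, 0 ≤ X t)
    (hrec : ∀ t < l, X (t + 1) - X t ≥ (1 / l) * V - (2 / l) * X t) :
    X l ≥ ((1 - (1 - 2 / (l : ℝ)) ^ l) / 2) * V ∧
    X l ≥ ((1 - Real.exp (-2)) / 2) * V := by
  have hl' : (1:ℝ) ≤ (l:ℝ) := by exact_mod_cast hl
  have hlpos : (0:ℝ) < (l:ℝ) := by linarith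
  set c : ℝ := 1 - 2 / (l:ℝ) with hc
  have hhalf : c / 2 + 1 / (l:ℝ) = 1 / 2 := by
    rw [hc]; field_simp; ring
  have key : ∀ t, t ≤ l → X t ≥ ((1 - c ^ t) / 2) * V := by
    intro t ht
    induction t with
    | zero => simp [hX0]
    | succ n ih =>
      have hn : n < l := ht
      have ihn := ih (le_of_lt hn)
      have hr := hrec n hn
      rcases eq_or_lt_of_le hl with h1 | h2
      · have hn0 : n = 0 := by omega
        subst hn0
        rw [hX0] at hr
        have hl1 : (l:ℝ) = 1 := by rw [← h1]; norm_num
        have hc1 : c = -1 := by rw [hc, hl1]; norm_num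
        rw [hl1] at hr
        rw [hc1]
        norm_num at hr ⊢
        linarith
      · have h2' : (2:ℝ) ≤ (l:ℝ) := by exact_mod_cast h2
        have hc0 : 0 ≤ c := by
          rw [hc, sub_nonneg, div_le_one hlpos]; exact h2'
        have h1 : X (n+1) ≥ c * X n + (1/(l:ℝ)) * V := by
          rw [hc]; nlinarith [hr]
        have hmul : c * X n ≥ c * (((1 - c ^ n)/2) * V) :=
          mul_le_mul_of_nonneg_left ihn hc0
        have hexp : c * (((1 - c ^ n)/2) * V) = (c/2) * V - (c ^ (n+1) / 2) * V := by
          rw [pow_succ' c n]; ring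
        have hhalfV : (c/2) * V + (1/(l:ℝ)) * V = (1/2) * V := by
          rw [← add_mul, hhalf]
        linarith [h1, hmul, hexp, hhalfV]
  have hfirst : X l ≥ ((1 - c ^ l) / 2) * V := key l le_rfl
  have hcexp : c ^ l ≤ Real.exp (-2) := by
    rcases eq_or_lt_of_le hl with h1 | h2
    · have hl1 : (l:ℝ) = 1 := by rw [← h1]; norm_num
      have hc1 : c = -1 := by rw [hc, hl1]; norm_num
      rw [← h1, pow_one, hc1]
      have := Real.exp_pos (-2)
      linarith
    · have h2' : (2:ℝ) ≤ (l:ℝ) := by exact_mod_cast h2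
      have hc0 : 0 ≤ c := by
        rw [hc, sub_nonneg, div_le_one hlpos]; exact h2'
      have hle : c ≤ Real.exp (-2/(l:ℝ)) := by
        have h := Real.add_one_le_exp (-(2/(l:ℝ)))
        rw [hc, neg_div]; linarith
      calc c ^ l ≤ Real.exp (-2/(l:ℝ)) ^ l := pow_le_pow_left₀ hc0 hle l
        _ = Real.exp ((l:ℝ) * (-2/(l:ℝ))) := (Real.exp_nat_mul _ l).symm
        _ = Real.exp (-2) := by
            congr 1
            field_simp
  refine ⟨hfirst, ?_⟩
  have : ((1 - Real.exp (-2)) / 2) * V ≤ ((1 - c ^ l) / 2) * V := by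
    apply mul_le_mul_of_nonneg_right _ hV
    linarith
  linarith
end
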